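/- Classification of constant rank weight codes: Let C be an [n,k,d] non-degenerate F_{q^m}-linear rank metric code in which every nonzero codeword has rank weight d. If k > 1, then n = mk, and the columns of any generator matrix of C form an F_q-basis of (F_{q^m})^k; moreover d = m and d_r(C) = mr for all 1 ≤ r ≤ k. -/

import Mathlib

open Matrix

/-- The `r`-th generalized rank weight (minimum q-support dimension of `r`-dim subcodes). -/
noncomputable def genRankWeight (Fq : Type*) {Fqm : Type*} [Field Fq] [Field Fqm]
    [Algebra Fq Fqm] {n : ℕ} (C : Submodule Fqm (Fin n → Fqm)) (r : ℕ) : ℕ :=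
  sInf { w | ∃ b : Fin r → Fin n → Fqm, LinearIndependent Fqm b ∧
    Submodule.span Fqm (Set.range b) ≤ C ∧
    w = Module.finrank Fq
      (Submodule.span Fq (Set.range fun j : Fin n => fun i : Fin r => b i j)) }

lemma crw_arith {q m k d n : ℕ} (hq : 2 ≤ q) (hm : 1 ≤ m) (hk : 2 ≤ k)
    (hd1 : 1 ≤ d) (hdm : d ≤ m) (hdn : d ≤ n)
    (heq : (q^(m*k) - 1) * (q^(n-d) - 1) = (q^n - 1) * (q^(m*(k-1)) - 1)) :
    d = m ∧ n = m * k := by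
  have hq0 : 0 < q := by omega
  have hq1 : (1:ℤ) ≤ (q:ℤ) := by exact_mod_cast hq0
  have hq2 : (2:ℤ) ≤ (q:ℤ) := by exact_mod_cast hq
  obtain ⟨A, hA⟩ : ∃ A : ℤ, A = (q:ℤ)^(n-d) := ⟨_, rfl⟩
  obtain ⟨B, hB⟩ : ∃ B : ℤ, B = (q:ℤ)^(m*(k-1)) := ⟨_, rfl⟩
  have hP1 : (1:ℤ) < (q:ℤ)^d := one_lt_pow₀ (by linarith) (by omega)
  have hQ1 : (1:ℤ) < (q:ℤ)^m := one_lt_pow₀ (by linarith) (by omega)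
  have hA1 : (1:ℤ) ≤ A := hA ▸ one_le_pow₀ hq1
  have hB1 : (1:ℤ) ≤ B := hB ▸ one_le_pow₀ hq1
  have hmm : m * (k-1) + m = m * k := by
    have hk' : k - 1 + 1 = k := by omega
    calc m * (k-1) + m = m * ((k-1) + 1) := by rw [Nat.mul_succ]
    _ = m * k := by rw [hk']
  have hn' : (q:ℤ)^n = A * (q:ℤ)^d := by
    rw [hA, ← pow_add]; congr 1; omega
  have hmk' : (q:ℤ)^(m*k) = B * (q:ℤ)^m := by
    rw [hB, ← pow_add]; congr 1; exact hmm.symm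
  have hZ : (B * (q:ℤ)^m - 1) * (A - 1) = (A * (q:ℤ)^d - 1) * (B - 1) := by
    have h1 : (1:ℕ) ≤ q^(m*k) := Nat.one_le_pow _ _ hq0
    have h2 : (1:ℕ) ≤ q^(n-d) := Nat.one_le_pow _ _ hq0
    have h3 : (1:ℕ) ≤ q^n := Nat.one_le_pow _ _ hq0
    have h4 : (1:ℕ) ≤ q^(m*(k-1)) := Nat.one_le_pow _ _ hq0
    have hcast := congrArg (fun x : ℕ => (x : ℤ)) heq
    push_cast [h1, h2, h3, h4] at hcast
    rw [← hmk', ← hn', hA, hB]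
    linarith [hcast]
  have hstar : A * B * ((q:ℤ)^m - (q:ℤ)^d) = B * ((q:ℤ)^m - 1) - A * ((q:ℤ)^d - 1) := by
    linear_combination hZ
  rcases eq_or_lt_of_le hdm with hdm' | hdm'
  · have hPQ : (q:ℤ)^d = (q:ℤ)^m := by rw [hdm']
    have hABeq : (A - B) * ((q:ℤ)^m - 1) = 0 := by
      rw [hPQ] at hstar; linear_combination hstar
    have hAB : A = B := by
      rcases mul_eq_zero.mp hABeq with h | h
      · linarith
      · exfalso; linarith
    have hAB' : (q:ℤ)^(n-d) = (q:ℤ)^(m*(k-1)) := by rw [← hA, ← hB]; exact hAB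
    have hnd' : n - d = m * (k - 1) := by
      have : (q:ℕ)^(n-d) = q^(m*(k-1)) := by exact_mod_cast hAB'
      exact Nat.pow_right_injective hq this
    refine ⟨hdm', ?_⟩
    set p := m * (k-1) with hp
    set P := m * k with hPt
    omega
  · exfalso
    have hqd : (q:ℤ)^d * q ≤ (q:ℤ)^m := by
      have : (q:ℤ)^(d+1) ≤ (q:ℤ)^m := pow_le_pow_right₀ hq1 (by omega)
      rw [pow_succ] at this; exact this
    have h1 : A * ((q:ℤ)^m - (q:ℤ)^d) ≤ (q:ℤ)^m - 1 := by
      have hBpos : (0:ℤ) < B := by linarith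
      have hAP : (0:ℤ) ≤ A * ((q:ℤ)^d - 1) :=
        mul_nonneg (by linarith) (by linarith)
      have ht : (A * ((q:ℤ)^m - (q:ℤ)^d)) * B ≤ ((q:ℤ)^m - 1) * B := by
        linarith [hstar, hAP]
      exact le_of_mul_le_mul_right ht hBpos
    have h2 : A * ((q:ℤ)^m) * ((q:ℤ) - 1) ≤ (q:ℤ) * ((q:ℤ)^m - 1) := by
      have t1 := mul_le_mul_of_nonneg_left h1 (by linarith : (0:ℤ) ≤ (q:ℤ))
      have t2 : 0 ≤ A * ((q:ℤ)^m - (q:ℤ)^d * (q:ℤ)) :=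
        mul_nonneg (by linarith) (by linarith [hqd])
      linarith [t1, t2]
    have hA2 : A < 2 := by
      by_contra hcon
      push_neg at hcon
      have t3 : (2:ℤ) * ((q:ℤ)^m * ((q:ℤ) - 1)) ≤ A * ((q:ℤ)^m * ((q:ℤ) - 1)) :=
        mul_le_mul_of_nonneg_right hcon (mul_nonneg (by linarith) (by linarith))
      have t4 : (2:ℤ) * (q:ℤ)^m ≤ (q:ℤ) * (q:ℤ)^m :=
        mul_le_mul_of_nonneg_right hq2 (by linarith)
      linarith [h2, t3, t4, hq2]
    have hAeq : A = 1 := by omega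
    have hBeq1 : (B - 1) * ((q:ℤ)^d - 1) = 0 := by
      rw [hAeq] at hstar; linear_combination -hstar
    have hBeq : B = 1 := by
      rcases mul_eq_zero.mp hBeq1 with h | h
      · linarith
      · exfalso; linarith
    have hB' : (q:ℤ)^(m*(k-1)) = (q:ℤ)^0 := by rw [← hB]; simpa using hBeq
    have hmk0 : m * (k-1) = 0 := by
      have h5 : (q:ℕ)^(m*(k-1)) = q^0 := by exact_mod_cast hB'
      exact Nat.pow_right_injective hq h5
    rcases Nat.mul_eq_zero.mp hmk0 with h | h <;> omega

lemma crw_card_ne {α : Type*} [Finite α] (a : α) :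
    Nat.card {x : α // x ≠ a} = Nat.card α - 1 := by
  classical
  have := Fintype.ofFinite α
  rw [Nat.card_eq_fintype_card, Nat.card_eq_fintype_card]
  have : Fintype.card {x : α // ¬ (x = a)} = Fintype.card α - Fintype.card {x : α // x = a} :=
    Fintype.card_subtype_compl _
  simpa [Fintype.card_subtype_eq] using this

lemma crw_card_sigma {ι : Type*} [Finite ι] {f : ι → Type*} [∀ i, Finite (f i)]
    {c : ℕ} (h : ∀ i, Nat.card (f i) = c) :
    Nat.card (Σ i, f i) = Nat.card ι * c := by
  classical
  have := Fintype.ofFinite ι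
  have : ∀ i, Fintype (f i) := fun i => Fintype.ofFinite (f i)
  simp only [Nat.card_eq_fintype_card, Fintype.card_sigma]
  rw [Finset.sum_congr rfl (fun i _ => by rw [← Nat.card_eq_fintype_card, h i])]
  simp [Finset.sum_const, mul_comm]

lemma crw_card_submodule {Fq M : Type*} [Field Fq] [Fintype Fq] [AddCommGroup M]
    [Module Fq M] [Finite M] (p : Submodule Fq M) :
    Nat.card p = Fintype.card Fq ^ Module.finrank Fq p := by
  classical
  have := Fintype.ofFinite M
  have : Fintype p := Fintype.ofFinite p
  rw [Nat.card_eq_fintype_card]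
  exact Module.card_eq_pow_finrank

/-- The linear functional `v ↦ ∑ i, v i • u i`. -/
noncomputable def crwPhi {Fqm : Type*} [Field Fqm] {k : ℕ} (u : Fin k → Fqm) :
    (Fin k → Fqm) →ₗ[Fqm] Fqm :=
  Fintype.linearCombination Fqm u

lemma crwPhi_apply {Fqm : Type*} [Field Fqm] {k : ℕ} (u v : Fin k → Fqm) :
    crwPhi u v = ∑ i, v i * u i := by
  simp [crwPhi, Fintype.linearCombination_apply, smul_eq_mul]

lemma crwPhi_comm {Fqm : Type*} [Field Fqm] {k : ℕ} (u v : Fin k → Fqm) :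
    crwPhi u v = crwPhi v u := by
  simp [crwPhi_apply, mul_comm]

/-- Classification of constant rank weight codes: if `C` is an `[n,k,d]`
non-degenerate linear rank metric code (generator matrix `G` with rows `G i`, columns
`F_q`-linearly independent) in which every nonzero codeword has rank weight `d`, and `k > 1`,
then `n = mk`, the columns of `G` form an `F_q`-basis of `(F_{q^m})^k`, `d = m`, and
`d_r(C) = mr` for `1 ≤ r ≤ k`. -/
theorem constant_rank_weight_classification
    {Fq Fqm : Type*} [Field Fq] [Field Fqm] [Algebra Fq Fqm]
    [Fintype Fq] [Fintype Fqm]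
    {m n k d : ℕ} (hm : Module.finrank Fq Fqm = m) (hk : 1 < k)
    (C : Submodule Fqm (Fin n → Fqm)) (hCk : Module.finrank Fqm C = k)
    (G : Fin k → Fin n → Fqm) (hGind : LinearIndependent Fqm G)
    (hGspan : Submodule.span Fqm (Set.range G) = C)
    (hnd : LinearIndependent Fq (fun j : Fin n => fun i : Fin k => G i j))
    (hconst : ∀ x ∈ C, x ≠ 0 →
      Module.finrank Fq (Submodule.span Fq (Set.range x)) = d) :
    n = m * k ∧
    Submodule.span Fq (Set.range fun j : Fin n => fun i : Fin k => G i j) = ⊤ ∧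
    d = m ∧
    ∀ r : ℕ, 1 ≤ r → r ≤ k → genRankWeight Fq C r = m * r := by
  classical
  set q := Fintype.card Fq with hqdef
  have hq2 : 2 ≤ q := Fintype.one_lt_card
  have hm1 : 1 ≤ m := by rw [← hm]; exact Module.finrank_pos
  set cols : Fin n → Fin k → Fqm := fun j : Fin n => fun i : Fin k => G i j with hcols
  set V : Submodule Fq (Fin k → Fqm) := Submodule.span Fq (Set.range cols) with hV
  have hVn : Module.finrank Fq V = n := by
    rw [hV, finrank_span_eq_card hnd, Fintype.card_fin]
  -- codewords from coefficient vectors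
  have hmemC : ∀ u : Fin k → Fqm, (∑ t, u t • G t) ∈ C := by
    intro u
    rw [← hGspan]
    exact Submodule.sum_mem _ fun t _ =>
      Submodule.smul_mem _ _ (Submodule.subset_span (Set.mem_range_self t))
  have hnezero : ∀ u : Fin k → Fqm, u ≠ 0 → (∑ t, u t • G t) ≠ 0 := by
    intro u hu h0
    exact hu (funext fun t => Fintype.linearIndependent_iff.mp hGind u h0 t)
  -- the range of the restricted functional is the q-support of the codeword
  have hrange : ∀ u : Fin k → Fqm,
      LinearMap.range (((crwPhi u).restrictScalars Fq) ∘ₗ V.subtype)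
        = Submodule.span Fq (Set.range (∑ t, u t • G t)) := by
    intro u
    have hfun : (⇑((crwPhi u).restrictScalars Fq) ∘ cols) = (∑ t, u t • G t) := by
      funext j
      simp only [Function.comp_apply, LinearMap.coe_restrictScalars, crwPhi_apply,
        Finset.sum_apply, Pi.smul_apply, smul_eq_mul]
      exact Finset.sum_congr rfl fun t _ => by simp [hcols, mul_comm]
    rw [LinearMap.range_comp, Submodule.range_subtype, hV, Submodule.map_span,
      ← Set.range_comp, hfun]
  have hwd : ∀ u : Fin k → Fqm, u ≠ 0 →
      Module.finrank Fq (LinearMap.range (((crwPhi u).restrictScalars Fq) ∘ₗ V.subtype)) = d := by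
    intro u hu
    rw [hrange u]
    exact hconst _ (hmemC u) (hnezero u hu)
  -- basic inequalities about d
  have hexu : ∃ u : Fin k → Fqm, u ≠ 0 := by
    refine ⟨Pi.single ⟨0, by omega⟩ 1, fun h => ?_⟩
    have := congrFun h ⟨0, by omega⟩
    simp [Pi.single_eq_same] at this
  obtain ⟨u0, hu0⟩ := hexu
  have hd1 : 1 ≤ d := by
    by_contra hcon
    have h0 : d = 0 := by omega
    have hbot : Submodule.span Fq (Set.range (∑ t, u0 t • G t)) = ⊥ := by
      apply Submodule.finrank_eq_zero.mp
      rw [hconst _ (hmemC u0) (hnezero u0 hu0), h0]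
    obtain ⟨j, hj⟩ := Function.ne_iff.mp (hnezero u0 hu0)
    apply hj
    have hmem : (∑ t, u0 t • G t) j ∈ Submodule.span Fq (Set.range (∑ t, u0 t • G t)) :=
      Submodule.subset_span (Set.mem_range_self j)
    rwa [hbot, Submodule.mem_bot] at hmem
  have hdm : d ≤ m := by
    rw [← hwd u0 hu0, ← hm]
    exact Submodule.finrank_le _
  have hdn : d ≤ n := by
    rw [← hwd u0 hu0, ← hVn]
    exact LinearMap.finrank_range_le _
  -- kernel dimensions
  have hker : ∀ u : Fin k → Fqm, u ≠ 0 →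
      Module.finrank Fq (LinearMap.ker (((crwPhi u).restrictScalars Fq) ∘ₗ V.subtype)) = n - d := by
    intro u hu
    have := LinearMap.finrank_range_add_finrank_ker (((crwPhi u).restrictScalars Fq) ∘ₗ V.subtype)
    rw [hwd u hu, hVn] at this
    omega
  -- kernel of the pairing in the other variable
  have hkerw : ∀ w : Fin k → Fqm, w ≠ 0 →
      Module.finrank Fqm (LinearMap.ker (crwPhi w)) = k - 1 := by
    intro w hw
    have hsurj : Function.Surjective (crwPhi w) := by
      intro c
      obtain ⟨i, hi⟩ := Function.ne_iff.mp hw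
      have hi' : w i ≠ 0 := by simpa using hi
      refine ⟨Pi.single i (c * (w i)⁻¹), ?_⟩
      rw [crwPhi_apply]
      rw [Finset.sum_eq_single i]
      · rw [Pi.single_eq_same]
        field_simp
      · intro t _ ht; simp [Pi.single_eq_of_ne ht]
      · intro h; exact absurd (Finset.mem_univ i) h
    have hrn := LinearMap.finrank_range_add_finrank_ker (crwPhi w)
    rw [LinearMap.range_eq_top.mpr hsurj, finrank_top, Module.finrank_self,
      Module.finrank_pi, Fintype.card_fin] at hrn
    omega
  set Q := Fintype.card Fqm with hQdef
  have hQ : Q = q ^ m := by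
    rw [hQdef, hqdef, ← hm]; exact Module.card_eq_pow_finrank
  -- double counting
  have hcard1 : Nat.card (Σ u : {u : Fin k → Fqm // u ≠ 0},
      {w : ↥V // w ≠ 0 ∧ crwPhi u.1 ↑w = 0}) = (Q^k - 1) * (q^(n-d) - 1) := by
    rw [crw_card_sigma (c := q^(n-d) - 1) ?_]
    · congr 1
      rw [crw_card_ne, Nat.card_eq_fintype_card, Fintype.card_fun, Fintype.card_fin]
    · intro u
      have e : {w : ↥V // w ≠ 0 ∧ crwPhi u.1 ↑w = 0} ≃
          {y : ↥(LinearMap.ker (((crwPhi u.1).restrictScalars Fq) ∘ₗ V.subtype)) // y ≠ 0} :=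
        { toFun := fun p => ⟨⟨p.1, LinearMap.mem_ker.mpr p.2.2⟩,
            fun h => p.2.1 (by simpa [Submodule.mk_eq_zero] using h)⟩
          invFun := fun y => ⟨y.1.1, ⟨fun h => y.2 (by
            apply Subtype.ext; simpa using h), y.1.2⟩⟩
          left_inv := fun p => rfl
          right_inv := fun y => rfl }
      rw [Nat.card_congr e, crw_card_ne, crw_card_submodule, hker u.1 u.2]
  have hcard2 : Nat.card (Σ w : {w : ↥V // w ≠ 0},
      {u : Fin k → Fqm // u ≠ 0 ∧ crwPhi u ↑w.1 = 0}) = (q^n - 1) * (Q^(k-1) - 1) := by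
    rw [crw_card_sigma (c := Q^(k-1) - 1) ?_]
    · congr 1
      rw [crw_card_ne, crw_card_submodule, hVn]
    · intro w
      have hw0 : (↑w.1 : Fin k → Fqm) ≠ 0 := by
        intro h
        exact w.2 (Subtype.ext h)
      have e : {u : Fin k → Fqm // u ≠ 0 ∧ crwPhi u ↑w.1 = 0} ≃
          {y : ↥(LinearMap.ker (crwPhi (↑w.1 : Fin k → Fqm))) // y ≠ 0} :=
        { toFun := fun p => ⟨⟨p.1, LinearMap.mem_ker.mpr (by rw [crwPhi_comm]; exact p.2.2)⟩,
            fun h => p.2.1 (by simpa [Submodule.mk_eq_zero] using h)⟩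
          invFun := fun y => ⟨y.1.1, ⟨fun h => y.2 (Subtype.ext h), by
            rw [crwPhi_comm]; exact y.1.2⟩⟩
          left_inv := fun p => rfl
          right_inv := fun y => rfl }
      rw [Nat.card_congr e, crw_card_ne, crw_card_submodule, hkerw _ hw0]
  have e12 : (Σ u : {u : Fin k → Fqm // u ≠ 0}, {w : ↥V // w ≠ 0 ∧ crwPhi u.1 ↑w = 0}) ≃
      (Σ w : {w : ↥V // w ≠ 0}, {u : Fin k → Fqm // u ≠ 0 ∧ crwPhi u ↑w.1 = 0}) :=
    { toFun := fun p => ⟨⟨p.2.1, p.2.2.1⟩, ⟨p.1.1, p.1.2, p.2.2.2⟩⟩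
      invFun := fun p => ⟨⟨p.2.1, p.2.2.1⟩, ⟨p.1.1, p.1.2, p.2.2.2⟩⟩
      left_inv := fun p => rfl
      right_inv := fun p => rfl }
  have heq : (q^(m*k) - 1) * (q^(n-d) - 1) = (q^n - 1) * (q^(m*(k-1)) - 1) := by
    have h := Nat.card_congr e12
    rw [hcard1, hcard2] at h
    rwa [hQ, ← pow_mul, ← pow_mul] at h
  obtain ⟨hdmeq, hneq⟩ := crw_arith hq2 hm1 hk hd1 hdm hdn heq
  -- V = ⊤
  have hpik : Module.finrank Fq (Fin k → Fqm) = m * k := by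
    rw [Module.finrank_pi_fintype]
    simp [hm, Nat.mul_comm]
  have hVtop : V = ⊤ := by
    apply Submodule.eq_top_of_finrank_eq
    rw [hVn, hneq, hpik]
  -- the value of the support dimension of any r-dimensional subcode
  have hval : ∀ (r : ℕ), r ≤ k → ∀ b : Fin r → Fin n → Fqm, LinearIndependent Fqm b →
      Submodule.span Fqm (Set.range b) ≤ C →
      Module.finrank Fq
        (Submodule.span Fq (Set.range fun j : Fin n => fun i : Fin r => b i j)) = m * r := by
    intro r hrk b hbind hbspan
    have hcoord : ∀ i, ∃ c : Fin k → Fqm, ∑ t, c t • G t = b i := by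
      intro i
      have hbi : b i ∈ C := hbspan (Submodule.subset_span (Set.mem_range_self i))
      rw [← hGspan] at hbi
      exact Submodule.mem_span_range_iff_exists_fun (R := Fqm) |>.mp hbi
    choose u hu using hcoord
    have huind : LinearIndependent Fqm u := by
      have hbu : b = ⇑(Fintype.linearCombination Fqm G) ∘ u := by
        funext i
        rw [Function.comp_apply, Fintype.linearCombination_apply]
        exact (hu i).symm
      exact LinearIndependent.of_comp (Fintype.linearCombination Fqm G) (hbu ▸ hbind)
    have hrank : (Matrix.of u).rank = r := by
      have := huind.rank_matrix
      rwa [Fintype.card_fin] at this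
    have hsur : Function.Surjective (Matrix.of u).mulVecLin := by
      rw [← LinearMap.range_eq_top]
      apply Submodule.eq_top_of_finrank_eq
      have hr' : Module.finrank Fqm ↥(LinearMap.range (Matrix.of u).mulVecLin) = r := hrank
      rw [hr', Module.finrank_pi, Fintype.card_fin]
    have hcolsb : (fun j : Fin n => fun i : Fin r => b i j)
        = ⇑(((Matrix.of u).mulVecLin).restrictScalars Fq) ∘ cols := by
      funext j
      funext i
      simp only [Function.comp_apply, LinearMap.coe_restrictScalars, Matrix.mulVecLin_apply,
        Matrix.mulVec, dotProduct, Matrix.of_apply]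
      rw [← hu i, Finset.sum_apply]
      exact Finset.sum_congr rfl fun t _ => by simp [hcols]
    have hrtop : LinearMap.range (((Matrix.of u).mulVecLin).restrictScalars Fq) = ⊤ :=
      LinearMap.range_eq_top.mpr hsur
    rw [hcolsb, Set.range_comp, ← Submodule.map_span, ← hV, hVtop, Submodule.map_top, hrtop,
      finrank_top, Module.finrank_pi_fintype]
    simp [hm, Nat.mul_comm]
  refine ⟨hneq, hVtop, hdmeq, ?_⟩
  intro r hr1 hrk
  have hSet : { w | ∃ b : Fin r → Fin n → Fqm, LinearIndependent Fqm b ∧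
      Submodule.span Fqm (Set.range b) ≤ C ∧
      w = Module.finrank Fq
        (Submodule.span Fq (Set.range fun j : Fin n => fun i : Fin r => b i j)) }
      = {m * r} := by
    ext w
    simp only [Set.mem_setOf_eq, Set.mem_singleton_iff]
    constructor
    · rintro ⟨b, hbi, hbs, rfl⟩
      exact hval r hrk b hbi hbs
    · rintro rfl
      set b0 : Fin r → Fin n → Fqm := G ∘ Fin.castLE hrk with hb0
      have hb0ind : LinearIndependent Fqm b0 :=
        hGind.comp _ (Fin.castLE_injective hrk)
      have hb0span : Submodule.span Fqm (Set.range b0) ≤ C := by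
        rw [← hGspan]
        apply Submodule.span_le.mpr
        rintro _ ⟨i, rfl⟩
        exact Submodule.subset_span ⟨Fin.castLE hrk i, rfl⟩
      exact ⟨b0, hb0ind, hb0span, (hval r hrk b0 hb0ind hb0span).symm⟩
  rw [genRankWeight, hSet, csInf_singleton]
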